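/- Let 𝔰 be a Lie algebra over a field of characteristic zero. A solvable Lie 𝔰-algebra 𝔫 is minimal if and only if: (1) 𝔫 is 2-nilpotent; (2) [𝔰,𝔫] = 𝔫; (3) [𝔰,D𝔫] = 0; (4) 𝔫/D𝔫 is an irreducible 𝔰-module. -/

import Mathlib

section Aux

variable {K : Type*} [Field K] [CharZero K]
    {S : Type*} [LieRing S] [LieAlgebra K S]
    {N : Type*} [LieRing N] [LieAlgebra K N]
    (i : S →ₗ⁅K⁆ LieDerivation K N N)

/-- The span of brackets. -/
abbrev Dspan : Submodule K N := Submodule.span K {x | ∃ a b : N, ⁅a, b⁆ = x}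

lemma bracket_mem_Dspan (a b : N) : ⁅a, b⁆ ∈ (Dspan : Submodule K N) :=
  Submodule.subset_span ⟨a, b, rfl⟩

lemma ker_of_ker_brackets (h : ∀ (s : S) (a b : N), i s ⁅a, b⁆ = 0) :
    ∀ s : S, ∀ x ∈ (Dspan : Submodule K N), i s x = 0 := by
  intro s x hx
  have : (Dspan : Submodule K N) ≤ LinearMap.ker ((i s) : N →ₗ[K] N) := by
    rw [Submodule.span_le]
    rintro _ ⟨a, b, rfl⟩
    simpa using h s a b
  simpa using this hx

end Aux

theorem stmt2 (K : Type*) [Field K] [CharZero K]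
    (S : Type*) [LieRing S] [LieAlgebra K S]
    (N : Type*) [LieRing N] [LieAlgebra K N] [Module.Finite K N]
    (_hsolv : LieAlgebra.IsSolvable N)
    (i : S →ₗ⁅K⁆ LieDerivation K N N)
    (_hcr : ∀ p : Submodule K N, (∀ s : S, ∀ x ∈ p, i s x ∈ p) →
      ∃ q : Submodule K N, (∀ s : S, ∀ x ∈ q, i s x ∈ q) ∧ IsCompl p q) :
    ((∃ (s : S) (n : N), i s n ≠ 0) ∧
      ∀ M : LieSubalgebra K N, (∀ s : S, ∀ x ∈ M, i s x ∈ M) →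
        (M = ⊤ ∨ ∀ s : S, ∀ x ∈ M, i s x = 0))
    ↔
    ((∀ a b c : N, ⁅a, ⁅b, c⁆⁆ = 0) ∧
     (LieSubalgebra.lieSpan K N {x | ∃ (s : S) (n : N), i s n = x} = ⊤) ∧
     (∀ (s : S) (a b : N), i s ⁅a, b⁆ = 0) ∧
     (Submodule.span K {x | ∃ a b : N, ⁅a, b⁆ = x} ≠ ⊤ ∧
       ∀ p : Submodule K N, Submodule.span K {x | ∃ a b : N, ⁅a, b⁆ = x} ≤ p →
         (∀ s : S, ∀ x ∈ p, i s x ∈ p) →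
         p = Submodule.span K {x | ∃ a b : N, ⁅a, b⁆ = x} ∨ p = ⊤)) := by
  have hbr : ∀ a b : N, ⁅a, b⁆ ∈ (Dspan : Submodule K N) := bracket_mem_Dspan
  constructor
  · -- Forward direction: minimal ⇒ (1)-(4)
    rintro ⟨⟨s0, n0, hs0⟩, hmin⟩
    haveI : Nontrivial N := ⟨⟨i s0 n0, 0, hs0⟩⟩
    -- D is an invariant subalgebra
    have hDinv : ∀ s : S, ∀ x ∈ (Dspan : Submodule K N), i s x ∈ (Dspan : Submodule K N) := by
      intro s x hx
      induction hx using Submodule.span_induction with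
      | mem x hx =>
        obtain ⟨a, b, rfl⟩ := hx
        rw [LieDerivation.apply_lie_eq_add]
        exact Submodule.add_mem _ (hbr _ _) (hbr _ _)
      | zero => simp
      | add x y _ _ hx hy => rw [map_add]; exact Submodule.add_mem _ hx hy
      | smul c x _ hx => rw [map_smul]; exact Submodule.smul_mem _ c hx
    -- D ≠ ⊤ by solvability
    have hDne : (Dspan : Submodule K N) ≠ ⊤ := by
      intro hD
      have hstep : LieAlgebra.derivedSeries K N 1 = ⁅(⊤ : LieIdeal K N), (⊤ : LieIdeal K N)⁆ := by
        rw [LieAlgebra.derivedSeries_def, LieAlgebra.derivedSeriesOfIdeal_succ,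
          LieAlgebra.derivedSeriesOfIdeal_zero]
      have h2 : LieAlgebra.derivedSeries K N 1 = ⊤ := by
        have hle : (Dspan : Submodule K N) ≤
            (↑(⁅(⊤ : LieIdeal K N), (⊤ : LieIdeal K N)⁆ : LieIdeal K N) : Submodule K N) := by
          rw [Submodule.span_le]
          rintro _ ⟨a, b, rfl⟩
          exact LieSubmodule.lie_mem_lie (LieSubmodule.mem_top a) (LieSubmodule.mem_top b)
        rw [hstep, ← LieSubmodule.toSubmodule_eq_top, eq_top_iff, ← hD]
        exact hle
      exact (ne_of_lt (LieAlgebra.derivedSeries_lt_top_of_solvable K N)) h2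
    -- D as a Lie subalgebra
    let Dalg : LieSubalgebra K N :=
      { (Dspan : Submodule K N) with lie_mem' := fun {x y} _ _ => hbr x y }
    have hDalg_mem : ∀ x : N, x ∈ Dalg ↔ x ∈ (Dspan : Submodule K N) := fun x => Iff.rfl
    -- (3): 𝔰 kills D
    have h3 : ∀ (s : S) (a b : N), i s ⁅a, b⁆ = 0 := by
      rcases hmin Dalg (fun s x hx => hDinv s x hx) with h | h
      · exfalso
        apply hDne
        rw [eq_top_iff]
        intro x _
        exact (hDalg_mem x).mp (h ▸ LieSubalgebra.mem_top x)
      · exact fun s a b => h s _ (hbr a b)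
    have hDker : ∀ s : S, ∀ x ∈ (Dspan : Submodule K N), i s x = 0 :=
      ker_of_ker_brackets i h3
    -- the image set
    set T : Set N := {x | ∃ (s : S) (n : N), i s n = x} with hT
    have hTmem : ∀ (s : S) (x : N), i s x ∈ T := fun s x => ⟨s, x, rfl⟩
    have hMinv : ∀ x ∈ LieSubalgebra.lieSpan K N T, ∀ s : S,
        i s x ∈ LieSubalgebra.lieSpan K N T := by
      set M : LieSubalgebra K N := LieSubalgebra.lieSpan K N T with hM
      intro x hx
      refine (LieSubalgebra.lieSpan_induction (R := K)
        (p := fun x _ => x ∈ M ∧ ∀ s : S, i s x ∈ M) (hx := hx) ?_ ?_ ?_ ?_ ?_).2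
      · exact fun x hx => ⟨LieSubalgebra.subset_lieSpan hx,
          fun s => LieSubalgebra.subset_lieSpan (hTmem s x)⟩
      · exact ⟨M.zero_mem, fun s => by rw [map_zero]; exact M.zero_mem⟩
      swap
      · intro c x _ hx
        exact ⟨M.smul_mem c hx.1, fun s => by rw [map_smul]; exact M.smul_mem c (hx.2 s)⟩
      · intro x y _ _ hx hy
        exact ⟨M.add_mem hx.1 hy.1, fun s => by rw [map_add]; exact M.add_mem (hx.2 s) (hy.2 s)⟩
      · intro x y _ _ hx hy
        refine ⟨M.lie_mem hx.1 hy.1, fun s => ?_⟩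
        rw [LieDerivation.apply_lie_eq_add]
        exact M.add_mem (M.lie_mem hx.1 (hy.2 s)) (M.lie_mem (hx.2 s) hy.1)
    -- (2): lieSpan of image is everything
    have h2 : LieSubalgebra.lieSpan K N T = ⊤ := by
      rcases hmin (LieSubalgebra.lieSpan K N T) (fun s x hx => hMinv x hx s) with h | h
      · exact h
      · exfalso
        have hp0inv : ∀ s : S, ∀ x ∈ Submodule.span K T, i s x ∈ Submodule.span K T := by
          intro s x hx
          induction hx using Submodule.span_induction with
          | mem x hx => exact Submodule.subset_span (hTmem s x)
          | zero => simp
          | add x y _ _ hx hy => rw [map_add]; exact Submodule.add_mem _ hx hy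
          | smul c x _ hx => rw [map_smul]; exact Submodule.smul_mem _ c hx
        obtain ⟨q, hqinv, hcompl⟩ := _hcr (Submodule.span K T) hp0inv
        apply hs0
        have hx : ∀ x : N, ∀ s : S, i s x = 0 := by
          intro x s
          obtain ⟨a, ha, b, hb, rfl⟩ :=
            Submodule.mem_sup.mp (hcompl.codisjoint.eq_top.ge (Submodule.mem_top (x := x)))
          have h1 : i s a = 0 :=
            h s a (LieSubalgebra.submodule_span_le_lieSpan ha)
          have h2 : i s b = 0 := by
            have hq : i s b ∈ q := hqinv s b hb
            have hp : i s b ∈ Submodule.span K T := Submodule.subset_span (hTmem s b)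
            exact (Submodule.mem_bot K).mp (hcompl.disjoint.le_bot ⟨hp, hq⟩)
          rw [map_add, h1, h2, add_zero]
        exact hx n0 s0
    -- (1): 2-nilpotency.  The centralizer of D.
    have hcentral : ∀ (x : N), ∀ d ∈ (Dspan : Submodule K N), ⁅x, d⁆ = 0 := by
      let Z : LieSubalgebra K N :=
        { carrier := {x | ∀ d ∈ (Dspan : Submodule K N), ⁅x, d⁆ = 0}
          add_mem' := fun {x y} hx hy d hd => by rw [add_lie, hx d hd, hy d hd, add_zero]
          zero_mem' := fun d _ => zero_lie d
          smul_mem' := fun c {x} hx d hd => by rw [smul_lie, hx d hd, smul_zero]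
          lie_mem' := fun {x y} hx hy d hd => by
            rw [lie_lie, hx ⁅y, d⁆ (hbr y d), hy ⁅x, d⁆ (hbr x d), sub_self] }
      have hTZ : T ⊆ Z := by
        rintro _ ⟨s, n, rfl⟩
        intro d hd
        have h0 : i s ⁅n, d⁆ = 0 := hDker s _ (hbr n d)
        rw [LieDerivation.apply_lie_eq_add, hDker s d hd] at h0
        simpa using h0
      intro x d hd
      have hxM : x ∈ LieSubalgebra.lieSpan K N T := h2.ge (LieSubalgebra.mem_top x)
      exact LieSubalgebra.lieSpan_le.mpr hTZ hxM d hd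
    have h1 : ∀ a b c : N, ⁅a, ⁅b, c⁆⁆ = 0 := fun a b c => hcentral a _ (hbr b c)
    refine ⟨h1, h2, h3, hDne, ?_⟩
    -- (4): irreducibility of N/D
    intro p hDp hpinv
    let Palg : LieSubalgebra K N := { p with lie_mem' := fun {x y} _ _ => hDp (hbr x y) }
    rcases hmin Palg hpinv with h | h
    · right
      rw [eq_top_iff]
      intro x _
      exact h.ge (LieSubalgebra.mem_top x)
    · -- p is killed by 𝔰; show p = D
      left
      obtain ⟨q, hqinv, hcompl⟩ := _hcr p hpinv
      -- image lands in q
      have hTq : T ⊆ (q : Set N) := by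
        rintro _ ⟨s, n, rfl⟩
        obtain ⟨a, ha, b, hb, rfl⟩ :=
          Submodule.mem_sup.mp (hcompl.codisjoint.eq_top.ge (Submodule.mem_top (x := n)))
        rw [map_add, h s a ha, zero_add]
        exact hqinv s b hb
      -- q ⊔ D is a subalgebra containing T, hence equals ⊤
      have hqD : q ⊔ (Dspan : Submodule K N) = ⊤ := by
        let Q : LieSubalgebra K N :=
          { (q ⊔ (Dspan : Submodule K N) : Submodule K N) with
            lie_mem' := fun {x y} _ _ =>
              Submodule.mem_sup_right (hbr x y) }
        have : LieSubalgebra.lieSpan K N T ≤ Q := LieSubalgebra.lieSpan_le.mpr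
          (fun x hx => Submodule.mem_sup_left (hTq hx))
        rw [eq_top_iff]
        exact fun x _ => this (h2.ge (LieSubalgebra.mem_top x))
      have hmod := sup_inf_assoc_of_le (x := (Dspan : Submodule K N)) q (z := p) hDp
      rw [sup_comm (Dspan : Submodule K N) q, hqD, top_inf_eq,
        disjoint_iff.mp hcompl.disjoint.symm, sup_bot_eq] at hmod
      exact hmod
  · -- Backward direction: (1)-(4) ⇒ minimal
    rintro ⟨h1, h2, h3, hDne, hirr⟩
    have hDker : ∀ s : S, ∀ x ∈ (Dspan : Submodule K N), i s x = 0 :=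
      ker_of_ker_brackets i h3
    have hcentral : ∀ (x : N), ∀ d ∈ (Dspan : Submodule K N), ⁅x, d⁆ = 0 := by
      intro x d hd
      induction hd using Submodule.span_induction with
      | mem y hy => obtain ⟨a, b, rfl⟩ := hy; exact h1 x a b
      | zero => simp
      | add y z _ _ hy hz => rw [lie_add, hy, hz, add_zero]
      | smul c y _ hy => rw [lie_smul, hy, smul_zero]
    constructor
    · -- existence of nontrivial action
      by_contra hc
      push_neg at hc
      have hT0 : {x : N | ∃ (s : S) (n : N), i s n = x} ⊆ (⊥ : LieSubalgebra K N) := by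
        rintro _ ⟨s, n, rfl⟩
        rw [hc s n]
        exact (⊥ : LieSubalgebra K N).zero_mem
      have : (⊤ : LieSubalgebra K N) ≤ ⊥ := h2 ▸ LieSubalgebra.lieSpan_le.mpr hT0
      apply hDne
      rw [eq_top_iff]
      intro x _
      have hx0 : x = 0 := by
        have := this (LieSubalgebra.mem_top x)
        rwa [LieSubalgebra.mem_bot] at this
      rw [hx0]; exact Submodule.zero_mem _
    · -- minimality
      intro M hMinv
      have hpinv : ∀ s : S, ∀ x ∈ (M : Submodule K N) ⊔ (Dspan : Submodule K N),
          i s x ∈ (M : Submodule K N) ⊔ (Dspan : Submodule K N) := by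
        intro s x hx
        obtain ⟨a, ha, b, hb, rfl⟩ := Submodule.mem_sup.mp hx
        rw [map_add, hDker s b hb, add_zero]
        exact Submodule.mem_sup_left (hMinv s a ha)
      rcases hirr ((M : Submodule K N) ⊔ (Dspan : Submodule K N)) le_sup_right hpinv with h | h
      · -- M ⊆ D, so 𝔰 kills M
        right
        intro s x hx
        exact hDker s x (h.le (Submodule.mem_sup_left ((LieSubalgebra.mem_toSubmodule (L' := M)).mpr hx)))
      · -- M ⊔ D = ⊤; then D ⊆ M and M = ⊤
        left
        have hDM : (Dspan : Submodule K N) ≤ (M : Submodule K N) := by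
          rw [Submodule.span_le]
          rintro _ ⟨a, b, rfl⟩
          obtain ⟨m, hm, d, hd, rfl⟩ :=
            Submodule.mem_sup.mp (h.ge (Submodule.mem_top (x := a)))
          obtain ⟨m', hm', d', hd', rfl⟩ :=
            Submodule.mem_sup.mp (h.ge (Submodule.mem_top (x := b)))
          have c1 : ⁅m, d'⁆ = 0 := hcentral m d' hd'
          have c2 : ⁅d, (m' : N)⁆ = 0 := by
            rw [← neg_eq_zero, lie_skew, hcentral m' d hd]
          have c3 : ⁅d, d'⁆ = 0 := hcentral d d' hd'
          have e1 : ⁅m + d, m' + d'⁆ = ⁅m, m'⁆ := by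
            rw [lie_add, add_lie, add_lie, c1, c2, c3]
            simp
          rw [e1]
          exact (LieSubalgebra.mem_toSubmodule (L' := M)).mpr (M.lie_mem hm hm')
        rw [eq_top_iff]
        intro x _
        obtain ⟨m, hm, d, hd, rfl⟩ :=
          Submodule.mem_sup.mp (h.ge (Submodule.mem_top (x := x)))
        exact M.add_mem hm (hDM hd)
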